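/- Let N be a finite nonempty set of clients with n = |N|, where each client i ∈ N owns a finite nonempty set D_i of data blocks, the sets D_i are pairwise disjoint, and D = ⋃_{i∈N} D_i. For every utility metric v : 2^D → ℝ with v(∅) = 0, the Truth-Shapley block values satisfy efficiency: Σ_{i∈N} Σ_{j∈D_i} φ^TSV_{i,j}(v) = v(D). -/

import Mathlib

open Finset

/-- Shapley weight `w_m(k) = k! (m-k-1)! / m!`. -/
noncomputable def w (m k : ℕ) : ℝ :=
  (Nat.factorial k : ℝ) * (Nat.factorial (m - k - 1) : ℝ) / (Nat.factorial m : ℝ)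


lemma wA {m k : ℕ} (hk : 1 ≤ k) :
    (k : ℝ) * w m (k - 1) =
      (Nat.factorial k : ℝ) * (Nat.factorial (m - k) : ℝ) / (Nat.factorial m : ℝ) := by
  unfold w
  rw [show m - (k - 1) - 1 = m - k from by omega, ← mul_div_assoc, ← mul_assoc,
    ← Nat.cast_mul, Nat.mul_factorial_pred (by omega)]

lemma wB {m k : ℕ} (hk : k < m) :
    ((m - k : ℕ) : ℝ) * w m k =
      (Nat.factorial k : ℝ) * (Nat.factorial (m - k) : ℝ) / (Nat.factorial m : ℝ) := by
  have h : (m - k) * (Nat.factorial k * Nat.factorial (m - k - 1))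
      = Nat.factorial k * Nat.factorial (m - k) := by
    rw [mul_left_comm, Nat.mul_factorial_pred (by omega)]
  unfold w
  rw [← mul_div_assoc]
  congr 1
  exact_mod_cast h

lemma wC {m : ℕ} (hm : 1 ≤ m) : (m : ℝ) * w m (m - 1) = 1 := by
  unfold w
  rw [show m - (m - 1) - 1 = 0 from by omega]
  simp only [Nat.factorial_zero, Nat.cast_one, mul_one]
  rw [← mul_div_assoc, ← Nat.cast_mul, Nat.mul_factorial_pred (by omega)]
  exact div_self (Nat.cast_ne_zero.mpr (Nat.factorial_ne_zero m))

lemma shapley_eff {β : Type*} [DecidableEq β] (P : Finset β) (hP : P.Nonempty)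
    (u : Finset β → ℝ) (hu : u ∅ = 0) :
    ∑ j ∈ P, ∑ S ∈ (P.erase j).powerset, w P.card S.card * (u (insert j S) - u S) = u P := by
  set m := P.card with hm
  have step : ∀ j ∈ P,
      ∑ S ∈ (P.erase j).powerset, w m S.card * (u (insert j S) - u S)
      = (∑ T ∈ P.powerset, (if j ∈ T then w m (T.card - 1) * u T else 0))
        - ∑ T ∈ P.powerset, (if j ∉ T then w m T.card * u T else 0) := by
    intro j hj
    simp_rw [mul_sub, Finset.sum_sub_distrib]
    congr 1
    · rw [← Finset.sum_filter]
      refine Finset.sum_nbij' (i := fun S => insert j S) (j := fun T => T.erase j)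
        ?_ ?_ ?_ ?_ ?_
      · intro S hS
        simp only [mem_powerset] at hS
        simp only [mem_filter, mem_powerset]
        exact ⟨insert_subset hj (hS.trans (erase_subset _ _)), mem_insert_self _ _⟩
      · intro T hT
        simp only [mem_filter, mem_powerset] at hT
        simp only [mem_powerset]
        exact erase_subset_erase _ hT.1
      · intro S hS
        simp only [mem_powerset] at hS
        exact erase_insert (fun h => (notMem_erase j P) (hS h))
      · intro T hT
        simp only [mem_filter, mem_powerset] at hT
        exact insert_erase hT.2
      · intro S hS
        simp only [mem_powerset] at hS
        have hjS : j ∉ S := fun h => (notMem_erase j P) (hS h)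
        rw [card_insert_of_notMem hjS, Nat.add_sub_cancel]
    · rw [← Finset.sum_filter]
      refine Finset.sum_congr ?_ (fun _ _ => rfl)
      ext S
      simp [mem_powerset, subset_erase, and_comm]
  rw [Finset.sum_congr rfl step, Finset.sum_sub_distrib, Finset.sum_comm, Finset.sum_comm (s := P)]
  rw [← Finset.sum_sub_distrib]
  have term : ∀ T ∈ P.powerset,
      ((∑ j ∈ P, if j ∈ T then w m (T.card - 1) * u T else 0)
        - ∑ j ∈ P, if j ∉ T then w m T.card * u T else 0)
      = (T.card : ℝ) * (w m (T.card - 1) * u T)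
        - ((m - T.card : ℕ) : ℝ) * (w m T.card * u T) := by
    intro T hT
    simp only [mem_powerset] at hT
    congr 1
    · rw [Finset.sum_ite_mem, inter_eq_right.mpr hT, Finset.sum_const, nsmul_eq_mul]
    · rw [← Finset.sum_filter, Finset.filter_not, Finset.filter_mem_eq_inter,
        inter_eq_right.mpr hT, Finset.sum_const, nsmul_eq_mul, card_sdiff_of_subset hT]
  rw [Finset.sum_congr rfl term]
  rw [Finset.sum_eq_single_of_mem P (mem_powerset_self P)]
  · rw [hm, Nat.sub_self, Nat.cast_zero, zero_mul, sub_zero, ← mul_assoc,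
      wC hP.card_pos]
    · ring
  · intro T hT hTP
    simp only [mem_powerset] at hT
    rcases Nat.eq_zero_or_pos T.card with h0 | h1
    · rw [Finset.card_eq_zero.mp h0]
      simp [hu]
    · have hlt : T.card < m := Finset.card_lt_card (lt_of_le_of_ne hT hTP)
      rw [← mul_assoc, ← mul_assoc, wA h1, wB hlt]
      ring

/-- The induced utility `v^{(i)}(S) = ∑_{C ⊆ N∖{i}} w_n(|C|)·(v(D_C ∪ S) − v(D_C))`,
where `D_C = ⋃_{i'∈C} D_{i'}`. -/
noncomputable def vInd {α : Type*} [DecidableEq α] {ι : Type*} [Fintype ι] [DecidableEq ι]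
    (Dset : ι → Finset α) (v : Finset α → ℝ) (i : ι) (S : Finset α) : ℝ :=
  ∑ C ∈ (Finset.univ.erase i).powerset,
    w (Fintype.card ι) C.card * (v (C.biUnion Dset ∪ S) - v (C.biUnion Dset))

/-- The client-level Truth-Shapley value
`φ^TSV_i(v) = ∑_{C ⊆ N∖{i}} w_n(|C|)·(v(D_{C∪{i}}) − v(D_C))`. -/
noncomputable def tsvClient {α : Type*} [DecidableEq α] {ι : Type*} [Fintype ι] [DecidableEq ι]
    (Dset : ι → Finset α) (v : Finset α → ℝ) (i : ι) : ℝ :=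
  ∑ C ∈ (Finset.univ.erase i).powerset,
    w (Fintype.card ι) C.card * (v ((insert i C).biUnion Dset) - v (C.biUnion Dset))

/-- The block-level Truth-Shapley value
`φ^TSV_{i,j}(v) = ∑_{S ⊆ D_i∖{j}} w_{|D_i|}(|S|)·(v^{(i)}(S ∪ {j}) − v^{(i)}(S))`. -/
noncomputable def tsvBlock {α : Type*} [DecidableEq α] {ι : Type*} [Fintype ι] [DecidableEq ι]
    (Dset : ι → Finset α) (v : Finset α → ℝ) (i : ι) (j : α) : ℝ :=
  ∑ S ∈ ((Dset i).erase j).powerset,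
    w (Dset i).card S.card * (vInd Dset v i (insert j S) - vInd Dset v i S)

/-- Efficiency (EFF) of Truth-Shapley: the block-level values sum to the
utility of the full block set `D`. Part of Theorem 4.6. -/
theorem truth_shapley_efficiency {α : Type*} [DecidableEq α]
    {ι : Type*} [Fintype ι] [DecidableEq ι] [Nonempty ι]
    (Dset : ι → Finset α) (hne : ∀ i, (Dset i).Nonempty)
    (hdisj : ∀ i j : ι, i ≠ j → Disjoint (Dset i) (Dset j))
    (D : Finset α) (hD : D = Finset.univ.biUnion Dset)
    (v : Finset α → ℝ) (hv : v ∅ = 0) :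
    ∑ i : ι, ∑ j ∈ Dset i, tsvBlock Dset v i j = v D := by
  have h1 : ∀ i : ι, ∑ j ∈ Dset i, tsvBlock Dset v i j = vInd Dset v i (Dset i) := by
    intro i
    exact shapley_eff (Dset i) (hne i) (vInd Dset v i) (by simp [vInd])
  have h2 : ∀ i : ι, vInd Dset v i (Dset i) = tsvClient Dset v i := by
    intro i
    refine Finset.sum_congr rfl fun C hC => ?_
    rw [Finset.biUnion_insert, Finset.union_comm]
  have h3 := shapley_eff (Finset.univ : Finset ι) Finset.univ_nonempty
      (fun C => v (C.biUnion Dset)) (by simp [hv])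
  simp only [h1, h2]
  rw [hD, ← h3]
  simp only [tsvClient, Finset.card_univ]
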